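/- Let ε ∈ [0,1). For every z in the open unit disc 𝔻, the point 4(1−ε)z/(1+z)² lies in ℂ∖[1,∞); consequently the map z ↦ α(4(1−ε)z/(1+z)²), where α(ζ) := ζ/(1+√(1−ζ))² with the principal branch of the square root, is well-defined and holomorphic on 𝔻 with values in 𝔻. -/

import Mathlib

open Complex

/-- The map `α(ζ) = ζ/(1+√(1-ζ))²` with the principal branch of the square root. -/
noncomputable def alph (ζ : ℂ) : ℂ := ζ / (1 + (1 - ζ) ^ (1 / 2 : ℂ)) ^ 2

lemma re_cpow_half_pos {ζ : ℂ} (h : ζ ∈ Complex.slitPlane) : 0 < (ζ ^ (1/2 : ℂ)).re := by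
  have hz : ζ ≠ 0 := Complex.slitPlane_ne_zero h
  rw [Complex.cpow_def_of_ne_zero hz, Complex.exp_re]
  have him : (Complex.log ζ * (1/2 : ℂ)).im = ζ.arg / 2 := by
    simp [Complex.mul_im, Complex.log_im]
    ring
  rw [him]
  have harg : |ζ.arg| < Real.pi := by
    rcases lt_or_eq_of_le (Complex.abs_arg_le_pi ζ) with h1 | h1
    · exact h1
    · exfalso
      rcases abs_eq (le_of_lt Real.pi_pos) |>.mp h1 with h2 | h2
      · exact Complex.slitPlane_arg_ne_pi h h2
      · have := Complex.arg_mem_Ioc ζ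
        rw [h2] at this
        linarith [this.1]
  have hcos : 0 < Real.cos (ζ.arg / 2) := by
    apply Real.cos_pos_of_mem_Ioo
    constructor
    · rw [abs_lt] at harg; linarith [harg.1]
    · rw [abs_lt] at harg; linarith [harg.2]
  positivity

lemma sq_cpow_half {ζ : ℂ} : (ζ ^ (1/2 : ℂ)) ^ 2 = ζ := by
  rcases eq_or_ne ζ 0 with h | h
  · simp [h, Complex.zero_cpow (by norm_num : (1/2 : ℂ) ≠ 0)]
  · rw [sq, ← Complex.cpow_add _ _ h]
    norm_num

lemma one_add_ne_zero {z : ℂ} (hz : z ∈ Metric.ball (0:ℂ) 1) : 1 + z ≠ 0 := by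
  intro h
  have : z = -1 := by linear_combination h
  rw [Metric.mem_ball, dist_zero_right, this] at hz
  simp at hz

lemma q_re_pos {z : ℂ} (hz : z ∈ Metric.ball (0:ℂ) 1) : 0 < ((1 - z)/(1 + z)).re := by
  have h1 : Complex.normSq z < 1 := by
    rw [Metric.mem_ball, dist_zero_right] at hz
    have : ‖z‖ < 1 := hz
    nlinarith [Complex.sq_norm z, norm_nonneg z]
  have h2 : 0 < Complex.normSq (1 + z) :=
    Complex.normSq_pos.mpr (one_add_ne_zero hz)
  rw [Complex.div_re]
  rw [Complex.normSq_apply] at h1 h2 ⊢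
  simp only [Complex.add_re, Complex.add_im, Complex.sub_re, Complex.sub_im,
    Complex.one_re, Complex.one_im]
  rw [← add_div]
  apply div_pos _ h2
  nlinarith

lemma key_slit {ε : ℝ} (hε : ε ∈ Set.Ico (0 : ℝ) 1) {z : ℂ} (hz : z ∈ Metric.ball (0:ℂ) 1) :
    1 - 4 * (1 - (ε : ℂ)) * z / (1 + z) ^ 2 ∈ Complex.slitPlane := by
  have h1 : (1 : ℂ) + z ≠ 0 := one_add_ne_zero hz
  set q : ℂ := (1 - z)/(1 + z) with hq
  have hid : 1 - 4 * (1 - (ε : ℂ)) * z / (1 + z) ^ 2 = (ε : ℂ) + (1 - (ε : ℂ)) * q ^ 2 := by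
    rw [hq]
    field_simp
    ring
  rw [hid, Complex.mem_slitPlane_iff]
  have hqre : 0 < q.re := q_re_pos hz
  have hε1 : (0:ℝ) < 1 - ε := by linarith [hε.2]
  have hre : ((ε : ℂ) + (1 - (ε : ℂ)) * q ^ 2).re = ε + (1 - ε) * (q.re^2 - q.im^2) := by
    simp only [sq, Complex.add_re, Complex.mul_re, Complex.mul_im, Complex.sub_re,
      Complex.sub_im, Complex.one_re, Complex.one_im, Complex.ofReal_re, Complex.ofReal_im]
    ring
  have him : ((ε : ℂ) + (1 - (ε : ℂ)) * q ^ 2).im = (1 - ε) * (2 * q.re * q.im) := by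
    simp only [sq, Complex.add_im, Complex.mul_im, Complex.mul_re, Complex.sub_re,
      Complex.sub_im, Complex.one_re, Complex.one_im, Complex.ofReal_re, Complex.ofReal_im]
    ring
  rcases eq_or_ne q.im 0 with h | h
  · left
    rw [hre, h]
    nlinarith [hε.1, mul_pos hqre hqre]
  · right
    rw [him]
    exact mul_ne_zero (ne_of_gt hε1)
      (mul_ne_zero (mul_ne_zero two_ne_zero (ne_of_gt hqre)) h)

lemma alph_formula {ζ : ℂ} (h : 1 - ζ ∈ Complex.slitPlane) :
    alph ζ = (1 - (1 - ζ) ^ (1/2 : ℂ)) / (1 + (1 - ζ) ^ (1/2 : ℂ)) := by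
  set s : ℂ := (1 - ζ) ^ (1/2 : ℂ) with hs
  have hsre : 0 < s.re := re_cpow_half_pos h
  have hns : 1 + s ≠ 0 := by
    intro hc
    have : (1 + s).re = 0 := by rw [hc]; simp
    simp [Complex.add_re] at this
    linarith
  have hsq : s ^ 2 = 1 - ζ := sq_cpow_half
  rw [alph]
  rw [← hs, div_eq_div_iff (pow_ne_zero 2 hns) hns]
  linear_combination (1 + s) * hsq

lemma alph_abs_lt {ζ : ℂ} (h : 1 - ζ ∈ Complex.slitPlane) : ‖alph ζ‖ < 1 := by
  rw [alph_formula h]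
  set s : ℂ := (1 - ζ) ^ (1/2 : ℂ) with hs
  have hsre : 0 < s.re := re_cpow_half_pos h
  have hns : (0:ℝ) < ‖1 + s‖ := by
    rw [norm_pos_iff]
    intro hc
    have : (1 + s).re = 0 := by rw [hc]; simp
    simp [Complex.add_re] at this
    linarith
  rw [norm_div, div_lt_one hns]
  apply lt_of_pow_lt_pow_left₀ 2 (norm_nonneg _)
  rw [Complex.sq_norm, Complex.sq_norm, Complex.normSq_apply, Complex.normSq_apply]
  simp only [Complex.add_re, Complex.add_im, Complex.sub_re, Complex.sub_im,
    Complex.one_re, Complex.one_im]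
  nlinarith

theorem stmt18 (ε : ℝ) (hε : ε ∈ Set.Ico (0 : ℝ) 1) :
    (∀ z ∈ Metric.ball (0 : ℂ) 1, ∀ x : ℝ, 1 ≤ x →
      4 * (1 - (ε : ℂ)) * z / (1 + z) ^ 2 ≠ (x : ℂ)) ∧
    DifferentiableOn ℂ (fun z : ℂ => alph (4 * (1 - (ε : ℂ)) * z / (1 + z) ^ 2))
      (Metric.ball 0 1) ∧
    Set.MapsTo (fun z : ℂ => alph (4 * (1 - (ε : ℂ)) * z / (1 + z) ^ 2))
      (Metric.ball 0 1) (Metric.ball 0 1) := by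
  refine ⟨?_, ?_, ?_⟩
  · intro z hz x hx heq
    have h := key_slit hε hz
    rw [heq, Complex.mem_slitPlane_iff] at h
    rcases h with h | h
    · have : (1 - (x:ℂ)).re = 1 - x := by simp
      rw [this] at h
      linarith
    · apply h
      simp
  · intro z hz
    have h1z : (1 : ℂ) + z ≠ 0 := one_add_ne_zero hz
    have hw : DifferentiableAt ℂ (fun z : ℂ => 4 * (1 - (ε : ℂ)) * z / (1 + z) ^ 2) z := by
      apply DifferentiableAt.div
      · fun_prop
      · fun_prop
      · exact pow_ne_zero 2 h1z
    have hslit := key_slit hε hz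
    have hs : DifferentiableAt ℂ
        (fun z : ℂ => (1 - 4 * (1 - (ε : ℂ)) * z / (1 + z) ^ 2) ^ (1/2 : ℂ)) z := by
      exact DifferentiableAt.cpow ((differentiableAt_const _).sub hw)
        (differentiableAt_const _) hslit
    have hns : (1 : ℂ) + (1 - 4 * (1 - (ε : ℂ)) * z / (1 + z) ^ 2) ^ (1/2 : ℂ) ≠ 0 := by
      intro hc
      have h2 := re_cpow_half_pos hslit
      have : ((1:ℂ) + (1 - 4 * (1 - (ε : ℂ)) * z / (1 + z) ^ 2) ^ (1/2 : ℂ)).re = 0 := by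
        rw [hc]; simp
      simp only [Complex.add_re, Complex.one_re] at this
      linarith
    apply DifferentiableAt.differentiableWithinAt
    simp only [alph]
    exact DifferentiableAt.div hw ((((differentiableAt_const _).add hs)).pow 2)
      (pow_ne_zero 2 hns)
  · intro z hz
    show alph (4 * (1 - (ε : ℂ)) * z / (1 + z) ^ 2) ∈ Metric.ball (0:ℂ) 1
    rw [mem_ball_zero_iff]
    exact alph_abs_lt (key_slit hε hz)
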